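/- For all positive integers n, the determinant of the n×n Hankel matrix whose (i,j) entry is the Motzkin number M_{i+j+1} equals (-1)^{n/3} if n ≡ 0 (mod 3), (-1)^{(n-1)/3} if n ≡ 1 (mod 3), and 0 if n ≡ 2 (mod 3). -/

import Mathlib

/- The Motzkin number `M n`: the number of lattice paths from `(0,0)` to `(n,0)` with
steps `(1,1)`, `(1,0)`, `(1,-1)` that never go below the x-axis. -/
open scoped Classical in
noncomputable def motzkin (n : ℕ) : ℕ :=
  (Finset.univ.filter (fun f : Fin n → Fin 3 =>
    (∑ i, (1 - ((f i : ℕ) : ℤ))) = 0 ∧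
    ∀ m : ℕ, m ≤ n →
      0 ≤ ∑ i ∈ Finset.univ.filter (fun i : Fin n => (i : ℕ) < m),
        (1 - ((f i : ℕ) : ℤ)))).card

namespace MHankel


def S (f : ℕ → Fin 3) (m : ℕ) : ℤ := ∑ i ∈ Finset.range m, (1 - ((f i : ℕ) : ℤ))

def ext {N : ℕ} (f : Fin N → Fin 3) : ℕ → Fin 3 := fun i => if h : i < N then f ⟨i, h⟩ else 0

lemma ext_lt {N : ℕ} (f : Fin N → Fin 3) {i : ℕ} (h : i < N) : ext f i = f ⟨i, h⟩ := dif_pos h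

lemma S_succ (f : ℕ → Fin 3) (m : ℕ) : S f (m+1) = S f m + (1 - ((f m : ℕ) : ℤ)) :=
  Finset.sum_range_succ _ m

lemma S_le (f : ℕ → Fin 3) (m : ℕ) : S f m ≤ m := by
  induction m with
  | zero => simp [S]
  | succ m ih =>
    rw [S_succ]
    push_cast
    have : (0:ℤ) ≤ ((f m : ℕ) : ℤ) := by positivity
    omega

open scoped Classical in
noncomputable def P (N : ℕ) (k : ℤ) : ℕ :=
  (Finset.univ.filter (fun f : Fin N → Fin 3 =>
    S (ext f) N = k ∧ ∀ m ≤ N, 0 ≤ S (ext f) m)).card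

lemma sum_filter_lt {N : ℕ} (f : Fin N → Fin 3) {m : ℕ} (hm : m ≤ N) :
    ∑ i ∈ Finset.univ.filter (fun i : Fin N => (i : ℕ) < m), (1 - ((f i : ℕ) : ℤ))
      = S (ext f) m := by
  rw [Finset.sum_filter]
  have h1 : ∀ i : Fin N, (if (i:ℕ) < m then (1 - ((f i : ℕ) : ℤ)) else 0)
      = (fun j : ℕ => if j < m then (1 - ((ext f j : ℕ) : ℤ)) else 0) (i : ℕ) := by
    intro i
    simp only [ext_lt f i.isLt]
  rw [Finset.sum_congr rfl (fun i _ => h1 i),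
    Fin.sum_univ_eq_sum_range (fun j : ℕ => if j < m then (1 - ((ext f j : ℕ) : ℤ)) else 0) N]
  rw [← Finset.sum_filter]
  congr 1
  ext j
  simp only [Finset.mem_filter, Finset.mem_range]
  omega

lemma sum_univ_eq_S {N : ℕ} (f : Fin N → Fin 3) :
    (∑ i, (1 - ((f i : ℕ) : ℤ))) = S (ext f) N := by
  have := sum_filter_lt f (le_refl N)
  rw [← this]
  congr 1
  ext i
  simp [i.isLt]

lemma motzkin_eq_P (n : ℕ) : motzkin n = P n 0 := by
  unfold motzkin P
  congr 1
  apply Finset.filter_congr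
  intro f _
  constructor
  · rintro ⟨h1, h2⟩
    exact ⟨by rw [← sum_univ_eq_S]; exact h1, fun m hm => by rw [← sum_filter_lt f hm]; exact h2 m hm⟩
  · rintro ⟨h1, h2⟩
    exact ⟨by rw [sum_univ_eq_S]; exact h1, fun m hm => by rw [sum_filter_lt f hm]; exact h2 m hm⟩


lemma S_congr {f g : ℕ → Fin 3} {m : ℕ} (h : ∀ i < m, f i = g i) : S f m = S g m :=
  Finset.sum_congr rfl (fun i hi => by rw [h i (Finset.mem_range.mp hi)])

lemma P_neg {N : ℕ} {k : ℤ} (hk : k < 0) : P N k = 0 := by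
  unfold P
  rw [Finset.card_eq_zero, Finset.filter_eq_empty_iff]
  rintro f - ⟨h1, h2⟩
  have := h2 N le_rfl
  omega

lemma P_gt {N : ℕ} {k : ℤ} (hk : (N:ℤ) < k) : P N k = 0 := by
  unfold P
  rw [Finset.card_eq_zero, Finset.filter_eq_empty_iff]
  rintro f - ⟨h1, h2⟩
  have := S_le (ext f) N
  omega

lemma P_self (N : ℕ) : P N N = 1 := by
  unfold P
  rw [Finset.card_eq_one]
  refine ⟨fun _ => 0, ?_⟩
  ext f
  simp only [Finset.mem_filter, Finset.mem_univ, true_and, Finset.mem_singleton]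
  constructor
  · rintro ⟨h1, -⟩
    have key : ∀ M ≤ N, S (ext f) M = M → ∀ i : Fin N, (i:ℕ) < M → f i = 0 := by
      intro M
      induction M with
      | zero => intro _ _ i hi; omega
      | succ M ih =>
        intro hM hS i hi
        rw [S_succ] at hS
        have hle := S_le (ext f) M
        have h0 : (0:ℤ) ≤ ((ext f M : ℕ) : ℤ) := by positivity
        have hSM : S (ext f) M = M := by push_cast at hS ⊢; omega
        have hlast : ((ext f M : ℕ) : ℤ) = 0 := by push_cast at hS; omega
        rcases Nat.lt_or_ge (i:ℕ) M with h | h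
        · exact ih (le_of_lt (Nat.lt_of_succ_le hM)) hSM i h
        · have hiM : (i:ℕ) = M := by omega
          have : ext f M = f i := by
            rw [ext_lt f (show M < N by omega)]
            congr 1
            exact Fin.ext hiM.symm
          rw [this] at hlast
          have : (f i : ℕ) = 0 := by exact_mod_cast hlast
          exact Fin.ext this
    funext i
    exact key N le_rfl h1 i i.isLt
  · rintro rfl
    have hS : ∀ m, S (ext (fun _ : Fin N => (0:Fin 3))) m = m := by
      intro m
      unfold S
      have h1 : ∀ i ∈ Finset.range m, (1 - ((ext (fun _ : Fin N => (0:Fin 3)) i : ℕ) : ℤ)) = 1 := by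
        intro i _; unfold ext; split <;> simp
      rw [Finset.sum_congr rfl h1, Finset.sum_const, Finset.card_range, nsmul_eq_mul, mul_one]
    exact ⟨hS N, fun m _ => by rw [hS m]; positivity⟩

open scoped Classical in
lemma fiber_card (N : ℕ) (k : ℤ) (hk : 0 ≤ k) (v : Fin 3) :
    ((Finset.univ.filter (fun f : Fin (N+1) → Fin 3 =>
        S (ext f) (N+1) = k ∧ ∀ m ≤ N+1, 0 ≤ S (ext f) m)).filter
      (fun f => f (Fin.last N) = v)).card = P N (k - (1 - ((v:ℕ):ℤ))) := by
  classical
  unfold P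
  have hext : ∀ (f : Fin (N+1) → Fin 3) (m : ℕ), m ≤ N →
      S (ext (fun i : Fin N => f i.castSucc)) m = S (ext f) m := by
    intro f m hm
    apply S_congr
    intro i hi
    rw [ext_lt _ (show i < N by omega), ext_lt f (show i < N+1 by omega)]
    rfl
  have hextlast : ∀ f : Fin (N+1) → Fin 3, ext f N = f (Fin.last N) := by
    intro f; rw [ext_lt f (Nat.lt_succ_self N)]; rfl
  apply Finset.card_nbij' (i := fun f => fun i : Fin N => f i.castSucc)
    (j := fun g => (Fin.snoc g v : Fin (N+1) → Fin 3))
  · rintro f hf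
    simp only [Finset.mem_coe, Finset.mem_filter, Finset.mem_univ, true_and] at hf ⊢
    obtain ⟨⟨h1, h2⟩, h3⟩ := hf
    refine ⟨?_, fun m hm => by rw [hext f m hm]; exact h2 m (by omega)⟩
    rw [hext f N le_rfl]
    have hss := S_succ (ext f) N
    rw [hextlast f, h3] at hss
    rw [h1] at hss
    linarith
  · rintro g hg
    simp only [Finset.mem_coe, Finset.mem_filter, Finset.mem_univ, true_and] at hg ⊢
    obtain ⟨h1, h2⟩ := hg
    have hid : ∀ m ≤ N, S (ext (Fin.snoc g v : Fin (N+1) → Fin 3)) m = S (ext g) m := by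
      intro m hm
      rw [← hext (Fin.snoc g v) m hm]
      apply S_congr
      intro i hi
      rw [ext_lt _ (lt_of_lt_of_le hi hm), ext_lt _ (lt_of_lt_of_le hi hm)]
      have hiN : i < N := lt_of_lt_of_le hi hm
      simp [Fin.snoc, hiN]
    have hlast : S (ext (Fin.snoc g v : Fin (N+1) → Fin 3)) (N+1) = k := by
      rw [S_succ, hextlast, Fin.snoc_last, hid N le_rfl, h1]; ring
    refine ⟨⟨hlast, fun m hm => ?_⟩, Fin.snoc_last _ _⟩
    rcases Nat.lt_or_ge m (N+1) with h | h
    · rw [hid m (by omega)]; exact h2 m (by omega)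
    · have hm' : m = N+1 := by omega
      rw [hm', hlast]; exact hk
  · intro f hf
    simp only [Finset.mem_coe, Finset.mem_filter] at hf
    funext i
    refine Fin.lastCases ?_ (fun j => ?_) i
    · dsimp only; rw [Fin.snoc_last, hf.2]
    · exact @Fin.snoc_castSucc N (fun _ => Fin 3) v _ j
  · intro g _
    funext i
    exact @Fin.snoc_castSucc N (fun _ => Fin 3) v g i

open scoped Classical in
lemma P_succ_rec (N : ℕ) (k : ℤ) (hk : 0 ≤ k) :
    P (N+1) k = P N (k-1) + P N k + P N (k+1) := by
  classical
  unfold P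
  rw [Finset.card_eq_sum_card_fiberwise (f := fun f : Fin (N+1) → Fin 3 => f (Fin.last N))
    (t := Finset.univ) (fun _ _ => Finset.mem_univ _)]
  have : ∀ v : Fin 3, (Finset.filter (fun f => f (Fin.last N) = v)
      (Finset.univ.filter (fun f : Fin (N+1) → Fin 3 =>
        S (ext f) (N+1) = k ∧ ∀ m ≤ N+1, 0 ≤ S (ext f) m))).card
      = P N (k - (1 - ((v:ℕ):ℤ))) := fun v => fiber_card N k hk v
  rw [Fin.sum_univ_three, this 0, this 1, this 2]
  have h0 : k - (1 - (((0:Fin 3):ℕ):ℤ)) = k - 1 := by norm_num [show ((0:Fin 3):ℕ) = 0 from rfl]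
  have h1 : k - (1 - (((1:Fin 3):ℕ):ℤ)) = k := by norm_num [show ((1:Fin 3):ℕ) = 1 from rfl]
  have h2 : k - (1 - (((2:Fin 3):ℕ):ℤ)) = k + 1 := by norm_num [show ((2:Fin 3):ℕ) = 2 from rfl]
  rw [h0, h1, h2]
  rfl


open scoped Classical in
noncomputable def Q (N : ℕ) (k : ℤ) : ℕ :=
  (Finset.univ.filter (fun g : Fin N → Fin 3 =>
    S (ext g) N = -k ∧ ∀ m ≤ N, 0 ≤ k + S (ext g) m)).card

/-- value reversal on `Fin 3` -/
def revv (v : Fin 3) : Fin 3 := ⟨2 - v.val, by omega⟩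

lemma revv_val (v : Fin 3) : ((revv v : Fin 3) : ℕ) = 2 - (v : ℕ) := rfl

lemma revv_revv (v : Fin 3) : revv (revv v) = v := by
  have := v.isLt
  apply Fin.ext
  simp only [revv]
  omega

/-- path reversal -/
def rev {N : ℕ} (f : Fin N → Fin 3) : Fin N → Fin 3 := fun i => revv (f i.rev)

lemma rev_rev {N : ℕ} (f : Fin N → Fin 3) : rev (rev f) = f := by
  funext i
  simp [rev, Fin.rev_rev, revv_revv]

lemma S_split (f : ℕ → Fin 3) (a m : ℕ) (h : a + m ≤ a + m) :
    S f (a + m) = S f a + ∑ i ∈ Finset.range m, (1 - ((f (a+i) : ℕ) : ℤ)) := by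
  induction m with
  | zero => simp [S]
  | succ m ih =>
    rw [← Nat.add_assoc, S_succ, ih (by omega), Finset.sum_range_succ]
    ring

/-- key reversal identity -/
lemma S_rev {N : ℕ} (f : Fin N → Fin 3) {m : ℕ} (hm : m ≤ N) :
    S (ext (rev f)) m = S (ext f) (N - m) - S (ext f) N := by
  have hterm : ∀ i < m, (1 - ((ext (rev f) i : ℕ) : ℤ))
      = -(1 - ((ext f (N - 1 - i) : ℕ) : ℤ)) := by
    intro i hi
    have hiN : i < N := lt_of_lt_of_le hi hm
    have hN1 : N - 1 - i < N := by omega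
    rw [ext_lt _ hiN, ext_lt _ hN1]
    show (1 - (((revv (f (Fin.rev ⟨i, hiN⟩)) : Fin 3) : ℕ) : ℤ)) = _
    have hrv : Fin.rev (⟨i, hiN⟩ : Fin N) = ⟨N - 1 - i, hN1⟩ := by
      apply Fin.ext
      simp [Fin.rev]
      omega
    rw [hrv, revv_val]
    have hlt := (f ⟨N - 1 - i, hN1⟩).isLt
    have : ((f ⟨N - 1 - i, hN1⟩ : ℕ) : ℤ) ≤ 2 := by exact_mod_cast Nat.lt_succ_iff.mp hlt
    have h0 : (0:ℤ) ≤ ((f ⟨N - 1 - i, hN1⟩ : ℕ) : ℤ) := by positivity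
    push_cast
    omega
  unfold S
  rw [Finset.sum_congr rfl (fun i hi => hterm i (Finset.mem_range.mp hi)), Finset.sum_neg_distrib]
  have hre : ∑ i ∈ Finset.range m, (1 - ((ext f (N - 1 - i) : ℕ) : ℤ))
      = ∑ j ∈ Finset.Ico (N - m) N, (1 - ((ext f j : ℕ) : ℤ)) := by
    apply Finset.sum_nbij' (i := fun i => N - 1 - i) (j := fun j => N - 1 - j)
    · intro i hi; simp only [Finset.mem_range] at hi; simp only [Finset.mem_Ico]; omega
    · intro j hj; simp only [Finset.mem_Ico] at hj; simp only [Finset.mem_range]; omega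
    · intro i hi; simp only [Finset.mem_range] at hi; omega
    · intro j hj; simp only [Finset.mem_Ico] at hj; omega
    · intro i hi; rfl
  rw [hre]
  have hsum : ∑ i ∈ Finset.range N, (1 - ((ext f i : ℕ) : ℤ))
      = ∑ i ∈ Finset.range (N-m), (1 - ((ext f i : ℕ) : ℤ))
        + ∑ j ∈ Finset.Ico (N - m) N, (1 - ((ext f j : ℕ) : ℤ)) := by
    simp only [Finset.range_eq_Ico]
    exact (Finset.sum_Ico_consecutive (fun i => (1 - ((ext f i : ℕ) : ℤ))) (Nat.zero_le (N-m)) (Nat.sub_le N m)).symm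
  have e1 : S (ext f) N = ∑ i ∈ Finset.range N, (1 - ((ext f i : ℕ) : ℤ)) := rfl
  have e2 : S (ext f) (N - m) = ∑ i ∈ Finset.range (N-m), (1 - ((ext f i : ℕ) : ℤ)) := rfl
  omega

lemma Q_eq_P (N : ℕ) (k : ℤ) : Q N k = P N k := by
  classical
  unfold Q P
  apply Finset.card_nbij' (i := rev) (j := rev)
  · intro g hg
    simp only [Finset.mem_coe, Finset.mem_filter, Finset.mem_univ, true_and] at hg ⊢
    obtain ⟨h1, h2⟩ := hg
    constructor
    · rw [S_rev g le_rfl, h1]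
      simp [S]
    · intro m hm
      rw [S_rev g hm, h1]
      have := h2 (N - m) (by omega)
      omega
  · intro f hf
    simp only [Finset.mem_coe, Finset.mem_filter, Finset.mem_univ, true_and] at hf ⊢
    obtain ⟨h1, h2⟩ := hf
    constructor
    · rw [S_rev f le_rfl, h1]
      simp [S]
    · intro m hm
      rw [S_rev f hm, h1]
      have := h2 (N - m) (by omega)
      omega
  · intro g _; exact rev_rev g
  · intro f _; exact rev_rev f



def Cmat (n : ℕ) : Matrix (Fin n) (Fin n) ℤ := fun k' k =>
  (if (k':ℕ) = (k:ℕ)+1 then 1 else 0) + (if (k':ℕ) = (k:ℕ) then 1 else 0)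
    + (if (k:ℕ) = (k':ℕ)+1 then 1 else 0)

lemma Cmat_val (n : ℕ) (i j : Fin n) :
    Cmat n i j = (if (i:ℕ) = (j:ℕ)+1 then 1 else 0) + (if (i:ℕ) = (j:ℕ) then 1 else 0)
      + (if (j:ℕ) = (i:ℕ)+1 then (1:ℤ) else 0) := rfl

lemma det_Cmat_zero : (Cmat 0).det = 1 := by simp [Matrix.det_isEmpty]

lemma det_Cmat_one : (Cmat 1).det = 1 := by
  rw [Matrix.det_fin_one]
  simp [Cmat]

lemma det_Cmat_rec (n : ℕ) : (Cmat (n+2)).det = (Cmat (n+1)).det - (Cmat n).det := by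
  rw [show (n+2) = (n+1)+1 from rfl, Matrix.det_succ_row_zero]
  rw [Fin.sum_univ_succ, Fin.sum_univ_succ]
  have hrow : ∀ j : Fin n, Cmat (n+2) 0 j.succ.succ = 0 := by
    intro j
    rw [Cmat_val]
    have : (j.succ.succ : ℕ) = (j:ℕ) + 2 := rfl
    rw [this]
    norm_num
    omega
  have hzero : ∀ j : Fin n,
      (-1 : ℤ) ^ ((j.succ.succ : ℕ)) * Cmat (n+2) 0 j.succ.succ
        * ((Cmat (n+2)).submatrix Fin.succ j.succ.succ.succAbove).det = 0 := by
    intro j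
    rw [hrow j]
    ring
  rw [Finset.sum_congr rfl (fun j _ => hzero j), Finset.sum_const_zero]
  have h00 : Cmat (n+2) 0 0 = 1 := by rw [Cmat_val]; norm_num
  have h01 : Cmat (n+2) 0 (Fin.succ 0) = 1 := by
    rw [Cmat_val]
    have : ((Fin.succ 0 : Fin (n+2)) : ℕ) = 1 := rfl
    rw [this]
    norm_num
  have hsub0 : (Cmat (n+2)).submatrix Fin.succ (0 : Fin (n+2)).succAbove = Cmat (n+1) := by
    ext i j
    rw [Matrix.submatrix_apply, Fin.zero_succAbove, Cmat_val, Cmat_val]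
    have h1 : ((Fin.succ i : Fin (n+2)) : ℕ) = (i:ℕ)+1 := rfl
    have h2 : ((Fin.succ j : Fin (n+2)) : ℕ) = (j:ℕ)+1 := rfl
    rw [h1, h2]
    split_ifs <;> (try contradiction) <;> omega
  rw [hsub0, h00, h01]
  have hD : ((Cmat (n+2)).submatrix Fin.succ (Fin.succ 0 : Fin (n+2)).succAbove).det
      = (Cmat n).det := by
    set D := (Cmat (n+2)).submatrix Fin.succ (Fin.succ 0 : Fin (n+2)).succAbove with hDdef
    rw [Matrix.det_succ_column_zero]
    rw [Fin.sum_univ_succ]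
    have hcol0 : ∀ i : Fin (n+1), D i 0
        = if (i:ℕ) = 0 then 1 else 0 := by
      intro i
      rw [hDdef, Matrix.submatrix_apply]
      have hsa : (Fin.succ 0 : Fin (n+2)).succAbove 0 = 0 :=
        Fin.succAbove_of_castSucc_lt _ _ (by simp [Fin.lt_def])
      rw [hsa, Cmat_val]
      have h1 : ((Fin.succ i : Fin (n+2)) : ℕ) = (i:ℕ)+1 := rfl
      have h2 : ((0 : Fin (n+2)) : ℕ) = 0 := rfl
      rw [h1, h2]
      split_ifs <;> (try contradiction) <;> omega
    have hrest : ∀ i : Fin n,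
        (-1:ℤ) ^ ((i.succ : ℕ)) * D i.succ 0 * (D.submatrix i.succ.succAbove Fin.succ).det = 0 := by
      intro i
      rw [hcol0]
      have : ((i.succ : Fin (n+1)) : ℕ) = (i:ℕ)+1 := rfl
      rw [this]
      norm_num
    rw [Finset.sum_congr rfl (fun i _ => hrest i), Finset.sum_const_zero, add_zero]
    rw [hcol0]
    have hsub : D.submatrix (0 : Fin (n+1)).succAbove Fin.succ = Cmat n := by
      ext i j
      rw [Matrix.submatrix_apply, Fin.zero_succAbove, hDdef, Matrix.submatrix_apply]
      have hsa : (Fin.succ 0 : Fin (n+2)).succAbove j.succ = j.succ.succ := by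
        apply Fin.succAbove_of_le_castSucc
        simp [Fin.le_def]
      rw [hsa, Cmat_val, Cmat_val]
      have h1 : ((Fin.succ (Fin.succ i) : Fin (n+2)) : ℕ) = (i:ℕ)+2 := rfl
      have h2 : ((Fin.succ (Fin.succ j) : Fin (n+2)) : ℕ) = (j:ℕ)+2 := rfl
      rw [h1, h2]
      split_ifs <;> (try contradiction) <;> omega
    rw [hsub]
    have v0 : ((0 : Fin (n+1)) : ℕ) = 0 := rfl
    rw [v0, pow_zero]
    norm_num
  rw [hD]
  have v0 : ((0 : Fin (n+2)) : ℕ) = 0 := rfl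
  have v1 : ((Fin.succ 0 : Fin (n+2)) : ℕ) = 1 := rfl
  rw [v0, v1, pow_zero, pow_one]
  ring



def fst3 {a b : ℕ} (f : Fin (a+b) → Fin 3) : Fin a → Fin 3 := fun i => f ⟨i, by omega⟩
def snd3 {a b : ℕ} (f : Fin (a+b) → Fin 3) : Fin b → Fin 3 := fun i => f ⟨a + i, by omega⟩
def glue {a b : ℕ} (g : Fin a → Fin 3) (h : Fin b → Fin 3) : Fin (a+b) → Fin 3 :=
  fun i => if hi : i.val < a then g ⟨i, hi⟩ else h ⟨i.val - a, by omega⟩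

lemma S_fst {a b : ℕ} (f : Fin (a+b) → Fin 3) {m : ℕ} (hm : m ≤ a) :
    S (ext (fst3 f)) m = S (ext f) m := by
  apply S_congr
  intro i hi
  rw [ext_lt _ (show i < a by omega), ext_lt _ (show i < a+b by omega)]
  rfl

lemma S_snd {a b : ℕ} (f : Fin (a+b) → Fin 3) {m : ℕ} (hm : m ≤ b) :
    S (ext (snd3 f)) m = S (ext f) (a+m) - S (ext f) a := by
  induction m with
  | zero => simp [S]
  | succ m ih =>
    rw [S_succ, ih (by omega)]
    have h2 : S (ext f) (a + (m+1)) = S (ext f) (a+m) + (1 - ((ext f (a+m) : ℕ) : ℤ)) := by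
      rw [show a+(m+1) = (a+m)+1 by omega, S_succ]
    rw [h2]
    have he : ext (snd3 f) m = ext f (a+m) := by
      rw [ext_lt _ (show m < b by omega), ext_lt _ (show a+m < a+b by omega)]
      rfl
    rw [he]
    ring

lemma fst3_glue {a b : ℕ} (g : Fin a → Fin 3) (h : Fin b → Fin 3) : fst3 (glue g h) = g := by
  funext i
  unfold fst3 glue
  rw [dif_pos i.isLt]

lemma snd3_glue {a b : ℕ} (g : Fin a → Fin 3) (h : Fin b → Fin 3) : snd3 (glue g h) = h := by
  funext i
  unfold snd3 glue
  rw [dif_neg (show ¬((⟨a + (i:ℕ), by omega⟩ : Fin (a+b)).val < a) by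
    show ¬(a + (i:ℕ) < a); omega)]
  congr 1
  apply Fin.ext
  show a + (i:ℕ) - a = (i:ℕ)
  omega

lemma glue_fst_snd {a b : ℕ} (f : Fin (a+b) → Fin 3) : glue (fst3 f) (snd3 f) = f := by
  funext i
  unfold glue fst3 snd3
  split
  · rfl
  · next hi =>
    congr 1
    apply Fin.ext
    show a + ((i:ℕ) - a) = (i:ℕ)
    omega

open scoped Classical in
lemma P_split (a b : ℕ) :
    P (a+b) 0 = ∑ k ∈ Finset.range (a+1), P a (k:ℤ) * Q b (k:ℤ) := by
  classical
  unfold P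
  rw [Finset.card_eq_sum_card_fiberwise
    (f := fun f : Fin (a+b) → Fin 3 => (S (ext f) a).toNat)
    (t := Finset.range (a+1))
    (fun f hf => by
      simp only [Finset.mem_coe, Finset.mem_filter, Finset.mem_univ, true_and] at hf
      have h1 := hf.2 a (by omega)
      have h2 := S_le (ext f) a
      simp only [Finset.mem_coe, Finset.mem_range]
      omega)]
  apply Finset.sum_congr rfl
  intro k hk
  simp only [Finset.mem_range] at hk
  have hcard : (Finset.univ.filter (fun g : Fin a → Fin 3 =>
          S (ext g) a = (k:ℤ) ∧ ∀ m ≤ a, 0 ≤ S (ext g) m)).card * Q b (k:ℤ)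
      = ((Finset.univ.filter (fun g : Fin a → Fin 3 =>
          S (ext g) a = (k:ℤ) ∧ ∀ m ≤ a, 0 ≤ S (ext g) m)) ×ˢ
        (Finset.univ.filter (fun h : Fin b → Fin 3 =>
          S (ext h) b = -(k:ℤ) ∧ ∀ m ≤ b, 0 ≤ (k:ℤ) + S (ext h) m))).card := by
    rw [Finset.card_product]
    rfl
  rw [hcard]
  apply Finset.card_nbij' (i := fun f => (fst3 f, snd3 f)) (j := fun p => glue p.1 p.2)
  · intro f hf
    simp only [Finset.mem_coe, Finset.mem_filter, Finset.mem_univ, true_and, Finset.mem_product] at hf ⊢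
    obtain ⟨⟨h1, h2⟩, h3⟩ := hf
    have hSa : S (ext f) a = (k:ℤ) := by
      have := h2 a (by omega)
      omega
    refine ⟨⟨?_, fun m hm => ?_⟩, ?_, fun m hm => ?_⟩
    · rw [S_fst f le_rfl, hSa]
    · rw [S_fst f hm]; exact h2 m (by omega)
    · rw [S_snd f le_rfl, h1, hSa]; ring
    · rw [S_snd f hm, hSa]
      have := h2 (a+m) (by omega)
      omega
  · rintro ⟨g, h⟩ hgh
    simp only [Finset.mem_coe, Finset.mem_filter, Finset.mem_univ, true_and, Finset.mem_product] at hgh ⊢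
    obtain ⟨⟨hg1, hg2⟩, hh1, hh2⟩ := hgh
    have hfst : ∀ m ≤ a, S (ext (glue g h)) m = S (ext g) m := by
      intro m hm
      rw [← S_fst (glue g h) hm, fst3_glue]
    have hsnd : ∀ m ≤ b, S (ext (glue g h)) (a+m) = (k:ℤ) + S (ext h) m := by
      intro m hm
      have := S_snd (glue g h) hm
      rw [snd3_glue, hfst a le_rfl, hg1] at this
      omega
    have htot : S (ext (glue g h)) (a+b) = 0 := by
      rw [hsnd b le_rfl, hh1]; ring
    refine ⟨⟨htot, fun m hm => ?_⟩, ?_⟩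
    · rcases Nat.lt_or_ge m a with h' | h'
      · rw [hfst m (by omega)]; exact hg2 m (by omega)
      · obtain ⟨m', rfl⟩ : ∃ m', m = a + m' := ⟨m - a, by omega⟩
        rw [hsnd m' (by omega)]
        exact hh2 m' (by omega)
    · rw [hfst a le_rfl, hg1]
      simp
  · intro f _
    exact glue_fst_snd f
  · rintro ⟨g, h⟩ _
    simp [fst3_glue, snd3_glue]


def tgt (n : ℕ) : ℤ :=
  if n % 3 = 0 then (-1) ^ (n / 3)
  else if n % 3 = 1 then (-1) ^ ((n - 1) / 3)
  else 0

lemma tgt_rec (n : ℕ) : tgt (n+2) = tgt (n+1) - tgt n := by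
  have h3 : n % 3 = 0 ∨ n % 3 = 1 ∨ n % 3 = 2 := by omega
  rcases h3 with h | h | h
  · obtain ⟨q, rfl⟩ : ∃ q, n = 3*q := ⟨n/3, by omega⟩
    have e1 : (3*q+2) % 3 = 2 := by omega
    have e2 : (3*q+1) % 3 = 1 := by omega
    have e3 : ((3*q+1) - 1)/3 = q := by omega
    have e4 : (3*q) % 3 = 0 := by omega
    have e5 : (3*q)/3 = q := by omega
    simp only [tgt, e1, e2, e3, e4, e5]
    norm_num
  · obtain ⟨q, rfl⟩ : ∃ q, n = 3*q+1 := ⟨n/3, by omega⟩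
    have e1 : (3*q+1+2) % 3 = 0 := by omega
    have e2 : (3*q+1+2) / 3 = q+1 := by omega
    have e3 : (3*q+1+1) % 3 = 2 := by omega
    have e4 : (3*q+1) % 3 = 1 := by omega
    have e5 : ((3*q+1) - 1)/3 = q := by omega
    simp only [tgt, e1, e2, e3, e4, e5]
    norm_num
    rw [pow_succ]
    ring
  · obtain ⟨q, rfl⟩ : ∃ q, n = 3*q+2 := ⟨n/3, by omega⟩
    have e1 : (3*q+2+2) % 3 = 1 := by omega
    have e2 : ((3*q+2+2) - 1) / 3 = q+1 := by omega
    have e3 : (3*q+2+1) % 3 = 0 := by omega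
    have e4 : (3*q+2+1) / 3 = q+1 := by omega
    have e5 : (3*q+2) % 3 = 2 := by omega
    simp only [tgt, e1, e2, e3, e4, e5]
    norm_num

lemma det_Cmat (n : ℕ) : (Cmat n).det = tgt n := by
  induction n using Nat.strong_induction_on with
  | _ n ih =>
    match n with
    | 0 => rw [det_Cmat_zero]; rfl
    | 1 => rw [det_Cmat_one]; rfl
    | (m+2) => rw [det_Cmat_rec, ih (m+1) (by omega), ih m (by omega), tgt_rec]


lemma sum_ind (n : ℕ) (g : ℕ → ℤ) (c : ℕ) :
    ∑ k' ∈ Finset.range n, g k' * (if k' = c then 1 else 0) = if c < n then g c else 0 := by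
  have h : ∀ k' ∈ Finset.range n, g k' * (if k' = c then 1 else 0)
      = if k' = c then g k' else 0 := by
    intro k' _
    split_ifs <;> ring
  rw [Finset.sum_congr rfl h, Finset.sum_ite_eq' (Finset.range n) c g]
  simp [Finset.mem_range]

noncomputable def Amat (n : ℕ) : Matrix (Fin n) (Fin n) ℤ :=
  Matrix.of fun i k => (P i.1 ((k.1 : ℕ) : ℤ) : ℤ)
noncomputable def Bmat (n : ℕ) : Matrix (Fin n) (Fin n) ℤ :=
  Matrix.of fun j k => (P (j.1+1) ((k.1 : ℕ) : ℤ) : ℤ)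

lemma H_eq (n : ℕ) :
    (Matrix.of fun i j : Fin n => (motzkin (i.1 + j.1 + 1) : ℤ)) = Amat n * (Bmat n).transpose := by
  ext i j
  rw [Matrix.mul_apply]
  simp only [Matrix.of_apply, Matrix.transpose_apply, Amat, Bmat]
  rw [Fin.sum_univ_eq_sum_range (fun k : ℕ => ((P i.1 (k:ℤ) : ℤ)) * ((P (j.1+1) (k:ℤ) : ℤ))) n]
  have hm : motzkin (i.1 + j.1 + 1) = P (i.1 + (j.1+1)) 0 := by
    rw [show i.1 + j.1 + 1 = i.1 + (j.1+1) by omega, motzkin_eq_P]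
  rw [hm, P_split, Nat.cast_sum]
  rw [Finset.sum_congr rfl (fun k _ => by rw [Q_eq_P, Nat.cast_mul])]
  apply Finset.sum_subset
  · exact Finset.range_subset_range.mpr (by omega)
  · intro k hk hk2
    simp only [Finset.mem_range] at hk hk2
    have hik : (i.1:ℤ) < (k:ℤ) := by exact_mod_cast (by omega : i.1 < k)
    rw [P_gt hik]
    push_cast
    ring

lemma B_eq (n : ℕ) : Bmat n = Amat n * Cmat n := by
  ext j k
  rw [Matrix.mul_apply]
  have hF : ∀ k' : Fin n, Amat n j k' * Cmat n k' k
      = (fun m : ℕ => (P j.1 (m:ℤ) : ℤ) * ((if m = (k:ℕ)+1 then 1 else 0)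
          + (if m = (k:ℕ) then 1 else 0) + (if (k:ℕ) = m+1 then (1:ℤ) else 0))) k'.1 :=
    fun k' => rfl
  rw [Finset.sum_congr rfl (fun k' _ => hF k'),
    Fin.sum_univ_eq_sum_range (fun m : ℕ => (P j.1 (m:ℤ) : ℤ) * ((if m = (k:ℕ)+1 then 1 else 0)
          + (if m = (k:ℕ) then 1 else 0) + (if (k:ℕ) = m+1 then (1:ℤ) else 0))) n]
  have hd : ∀ m ∈ Finset.range n, (P j.1 (m:ℤ) : ℤ) * ((if m = (k:ℕ)+1 then 1 else 0)
          + (if m = (k:ℕ) then 1 else 0) + (if (k:ℕ) = m+1 then (1:ℤ) else 0))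
      = (P j.1 (m:ℤ) : ℤ) * (if m = (k:ℕ)+1 then 1 else 0)
        + (P j.1 (m:ℤ) : ℤ) * (if m = (k:ℕ) then 1 else 0)
        + (P j.1 (m:ℤ) : ℤ) * (if (k:ℕ) = m+1 then (1:ℤ) else 0) := by
    intro m _
    ring
  rw [Finset.sum_congr rfl hd, Finset.sum_add_distrib, Finset.sum_add_distrib]
  have hT1 : ∑ m ∈ Finset.range n, (P j.1 (m:ℤ) : ℤ) * (if m = (k:ℕ)+1 then 1 else 0)
      = (P j.1 (((k:ℕ):ℤ)+1) : ℤ) := by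
    rw [sum_ind n (fun m => (P j.1 (m:ℤ) : ℤ)) ((k:ℕ)+1)]
    split_ifs with h
    · norm_num
    · rw [P_gt (show (j.1:ℤ) < ((k:ℕ):ℤ)+1 by exact_mod_cast (by omega : j.1 < (k:ℕ)+1))]
      norm_num
  have hT2 : ∑ m ∈ Finset.range n, (P j.1 (m:ℤ) : ℤ) * (if m = (k:ℕ) then 1 else 0)
      = (P j.1 ((k:ℕ):ℤ) : ℤ) := by
    rw [sum_ind n (fun m => (P j.1 (m:ℤ) : ℤ)) (k:ℕ), if_pos k.isLt]
  have hT3 : ∑ m ∈ Finset.range n, (P j.1 (m:ℤ) : ℤ) * (if (k:ℕ) = m+1 then (1:ℤ) else 0)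
      = (P j.1 (((k:ℕ):ℤ)-1) : ℤ) := by
    match hc : (k:ℕ) with
    | 0 =>
      have hz : ∀ m ∈ Finset.range n, (P j.1 (m:ℤ) : ℤ) * (if (0:ℕ) = m+1 then (1:ℤ) else 0)
          = 0 := by
        intro m _
        rw [if_neg (by omega)]
        ring
      rw [Finset.sum_congr rfl hz, Finset.sum_const_zero,
        P_neg (show ((0:ℕ):ℤ)-1 < 0 by norm_num)]
      norm_num
    | t+1 =>
      have hiff : ∀ m ∈ Finset.range n, (P j.1 (m:ℤ) : ℤ) * (if (t+1:ℕ) = m+1 then (1:ℤ) else 0)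
          = (P j.1 (m:ℤ) : ℤ) * (if m = t then (1:ℤ) else 0) := by
        intro m _
        congr 1
        split_ifs <;> first | rfl | omega
      rw [Finset.sum_congr rfl hiff, sum_ind n (fun m => (P j.1 (m:ℤ) : ℤ)) t,
        if_pos (show t < n by have := k.isLt; omega)]
      congr 2
      push_cast
      ring
  rw [hT1, hT2, hT3]
  show (P (j.1+1) ((k:ℕ):ℤ) : ℤ) = _
  rw [P_succ_rec j.1 ((k:ℕ):ℤ) (by positivity)]
  push_cast
  ring

lemma A_det (n : ℕ) : (Amat n).det = 1 := by
  rw [Matrix.det_of_lowerTriangular (Amat n) (fun i j h => by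
    show (P i.1 ((j.1:ℕ):ℤ) : ℤ) = 0
    rw [P_gt (show (i.1:ℤ) < ((j.1:ℕ):ℤ) by exact_mod_cast (show i.1 < j.1 from h))]
    norm_num)]
  have h1 : ∀ i : Fin n, Amat n i i = 1 := by
    intro i
    show (P i.1 ((i.1:ℕ):ℤ) : ℤ) = 1
    rw [P_self i.1]
    norm_num
  rw [Finset.prod_congr rfl (fun i _ => h1 i), Finset.prod_const_one]

end MHankel

theorem motzkin_hankel_det_shift (n : ℕ) (hn : 0 < n) :
    (Matrix.of fun i j : Fin n => (motzkin (i.1 + j.1 + 1) : ℤ)).det =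
      if n % 3 = 0 then (-1) ^ (n / 3)
      else if n % 3 = 1 then (-1) ^ ((n - 1) / 3)
      else 0 := by
  rw [MHankel.H_eq n, Matrix.det_mul, Matrix.det_transpose, MHankel.B_eq n, Matrix.det_mul,
    MHankel.A_det n, MHankel.det_Cmat n]
  simp only [one_mul]
  rfl
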